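/- arXiv:1509.05258 — 3 statements merged into one kernel-verified Lean document; each statement's English description precedes it below -/
import Mathlib

section
/- Jacobi–Maupertuis principle, pregeodesic form: Let F be a real inner product space, V : F → ℝ differentiable with gradient ∇V, E ∈ ℝ, and set f := 2(E − V) (so ∇f = −2∇V). Let x : ℝ → F be a curve whose derivative x' exists everywhere and is itself differentiable, satisfying Newton's equation x''(t) = −∇V(x(t)) and the energy relation (1/2)‖x'(t)‖² + V(x(t)) = E for all t, and assume f(x(t)) > 0 for all t. Then x solves the geodesic equation of the Jacobi metric h = f·⟨·,·⟩ up to reparametrization: for every t ∈ ℝ, x''(t) + (1/(2 f(x(t)))) · ( 2⟨∇f(x(t)), x'(t)⟩ · x'(t) − ‖x'(t)‖² · ∇f(x(t)) ) = ( ⟨∇f(x(t)), x'(t)⟩ / f(x(t)) ) · x'(t). -/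
open scoped RealInnerProductSpace

/-- Jacobi–Maupertuis principle, pregeodesic form: a Newtonian trajectory with
energy `E` solves the geodesic equation of the Jacobi metric `h = f⟨·,·⟩`,
`f = 2(E - V)`, up to reparametrization. -/
theorem jacobi_maupertuis_pregeodesic
    {F : Type*} [NormedAddCommGroup F] [InnerProductSpace ℝ F] [CompleteSpace F]
    (V : F → ℝ) (hV : Differentiable ℝ V) (E : ℝ)
    (f : F → ℝ) (hf : ∀ p, f p = 2 * (E - V p))
    (x x' x'' : ℝ → F)
    (hx : ∀ t, HasDerivAt x (x' t) t)
    (hx' : ∀ t, HasDerivAt x' (x'' t) t)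
    (hNewton : ∀ t, x'' t = -gradient V (x t))
    (hE : ∀ t, (1 / 2) * ‖x' t‖ ^ 2 + V (x t) = E)
    (hfpos : ∀ t, 0 < f (x t)) :
    ∀ t : ℝ,
      x'' t + (1 / (2 * f (x t))) •
          ((2 * ⟪gradient f (x t), x' t⟫) • x' t
            - ‖x' t‖ ^ 2 • gradient f (x t))
        = (⟪gradient f (x t), x' t⟫ / f (x t)) • x' t := by
  intro t
  -- gradient of f
  have hgradf : ∀ p : F, gradient f p = (-2 : ℝ) • gradient V p := by
    intro p
    have hVg : HasGradientAt V (gradient V p) p := (hV p).hasGradientAt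
    have : HasGradientAt f ((-2 : ℝ) • gradient V p) p := by
      rw [hasGradientAt_iff_hasFDerivAt]
      have hfd : HasFDerivAt V (InnerProductSpace.toDual ℝ F (gradient V p)) p :=
        hVg.hasFDerivAt
      have : HasFDerivAt (fun q => 2 * (E - V q))
          ((-2 : ℝ) • InnerProductSpace.toDual ℝ F (gradient V p)) p := by
        have := ((hasFDerivAt_const E p).sub hfd).const_mul (2 : ℝ)
        convert this using 1
        all_goals (try ext v)
        all_goals simp [mul_comm]
      have heq : f = fun q => 2 * (E - V q) := funext hf
      rw [heq]
      convert this using 1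
      · rfl
      · exact map_smul _ _ _
    exact this.gradient
  have hnorm : ‖x' t‖ ^ 2 = f (x t) := by
    have := hE t
    rw [hf]
    nlinarith [this]
  have hfne : f (x t) ≠ 0 := (hfpos t).ne'
  rw [hgradf, hNewton, hnorm]
  rw [smul_sub, smul_smul, smul_smul]
  have h1 : (1 / (2 * f (x t))) * (2 * ⟪(-2 : ℝ) • gradient V (x t), x' t⟫)
      = ⟪(-2 : ℝ) • gradient V (x t), x' t⟫ / f (x t) := by
    field_simp
  have h2 : (1 / (2 * f (x t))) * f (x t) = 1 / 2 := by
    field_simp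
  rw [h1, h2]
  rw [smul_smul]
  module
end

section
/- Jacobi–Maupertuis principle, arclength form: Let F be a real inner product space, V : F → ℝ differentiable with gradient ∇V, E ∈ ℝ, and set f := 2(E − V). Let x : ℝ → F be twice differentiable with x''(t) = −∇V(x(t)) and (1/2)‖x'(t)‖² + V(x(t)) = E for all t, and f(x(t)) > 0 for all t. Define σ(t) := ∫₀ᵗ f(x(u)) du, and suppose τ : ℝ → ℝ is differentiable on an open interval J with σ(τ(s)) = s for all s ∈ J. Then the reparametrized curve y := x ∘ τ is a unit-speed geodesic of the Jacobi metric on J: for all s ∈ J one has f(y(s)) · ‖y'(s)‖² = 1 and y''(s) = (1/(2 f(y(s)))) · ( ‖y'(s)‖² · ∇f(y(s)) − 2⟨∇f(y(s)), y'(s)⟩ · y'(s) ). -/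
open scoped RealInnerProductSpace

/-- Jacobi–Maupertuis principle, arclength form: reparametrizing a Newtonian
trajectory of energy `E` by the arclength `σ(t) = ∫₀ᵗ f(x(u)) du` of the Jacobi
metric `h = f⟨·,·⟩`, `f = 2(E - V)`, yields a unit-speed geodesic of `h`. -/
theorem jacobi_maupertuis_arclength
    {F : Type*} [NormedAddCommGroup F] [InnerProductSpace ℝ F] [CompleteSpace F]
    (V : F → ℝ) (hV : Differentiable ℝ V) (E : ℝ)
    (f : F → ℝ) (hf : ∀ p, f p = 2 * (E - V p))
    (x x' x'' : ℝ → F)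
    (hx : ∀ t, HasDerivAt x (x' t) t)
    (hx' : ∀ t, HasDerivAt x' (x'' t) t)
    (hNewton : ∀ t, x'' t = -gradient V (x t))
    (hE : ∀ t, (1 / 2) * ‖x' t‖ ^ 2 + V (x t) = E)
    (hfpos : ∀ t, 0 < f (x t))
    (σ : ℝ → ℝ) (hσ : ∀ t, σ t = ∫ u in (0:ℝ)..t, f (x u))
    (a b : ℝ) (τ : ℝ → ℝ)
    (hτ : DifferentiableOn ℝ τ (Set.Ioo a b))
    (hστ : ∀ s ∈ Set.Ioo a b, σ (τ s) = s) :
    ∀ s ∈ Set.Ioo a b,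
      f ((x ∘ τ) s) * ‖deriv (x ∘ τ) s‖ ^ 2 = 1 ∧
      deriv (deriv (x ∘ τ)) s
        = (1 / (2 * f ((x ∘ τ) s))) •
            (‖deriv (x ∘ τ) s‖ ^ 2 • gradient f ((x ∘ τ) s)
              - (2 * ⟪gradient f ((x ∘ τ) s), deriv (x ∘ τ) s⟫) •
                  deriv (x ∘ τ) s) := by
  have hfe : f = fun p => 2 * (E - V p) := funext hf
  -- gradient of f
  have hfg : ∀ p, HasGradientAt f ((2:ℝ) • (-gradient V p)) p := by
    intro p
    rw [hasGradientAt_iff_hasFDerivAt]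
    have h1 : HasFDerivAt f
        ((2:ℝ) • (-(InnerProductSpace.toDual ℝ F (gradient V p)))) p := by
      rw [hfe]
      exact (((hV p).hasGradientAt.hasFDerivAt).const_sub E).const_mul (2:ℝ)
    have h2 : (InnerProductSpace.toDual ℝ F) ((2:ℝ) • (-gradient V p)) =
        (2:ℝ) • (-(InnerProductSpace.toDual ℝ F (gradient V p))) := by
      simp
    rw [h2]; exact h1
  have hgradf : ∀ p, gradient f p = (2:ℝ) • (-gradient V p) :=
    fun p => (hfg p).gradient
  -- derivative of f ∘ x
  have hfx : ∀ t, HasDerivAt (fun u => f (x u)) (⟪gradient f (x t), x' t⟫) t := by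
    intro t
    have h := ((hfg (x t)).hasFDerivAt).comp_hasDerivAt t (hx t)
    have : (InnerProductSpace.toDual ℝ F ((2:ℝ) • (-gradient V (x t)))) (x' t)
        = ⟪gradient f (x t), x' t⟫ := by
      rw [InnerProductSpace.toDual_apply_apply, hgradf]
    rw [← this]
    exact h
  -- derivative of σ
  have hxdiff : Differentiable ℝ x := fun t => (hx t).differentiableAt
  have hfxc : Continuous (fun u => f (x u)) := by
    rw [hfe]
    exact continuous_const.mul (continuous_const.sub (hV.continuous.comp hxdiff.continuous))
  have hσd : ∀ t, HasDerivAt σ (f (x t)) t := by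
    intro t
    have hσe : σ = fun t => ∫ u in (0:ℝ)..t, f (x u) := funext hσ
    rw [hσe]
    exact (hfxc.integral_hasStrictDerivAt 0 t).hasDerivAt
  -- derivative of τ
  have hτda : ∀ s' ∈ Set.Ioo a b, HasDerivAt τ (deriv τ s') s' := fun s' hs' =>
    ((hτ s' hs').differentiableAt (isOpen_Ioo.mem_nhds hs')).hasDerivAt
  have hτ' : ∀ s' ∈ Set.Ioo a b, deriv τ s' = (f (x (τ s')))⁻¹ := by
    intro s' hs'
    have h1 : HasDerivAt (σ ∘ τ) (f (x (τ s')) * deriv τ s') s' :=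
      (hσd (τ s')).comp s' (hτda s' hs')
    have h2 : HasDerivAt (σ ∘ τ) 1 s' := by
      have heq : (σ ∘ τ) =ᶠ[nhds s'] id :=
        Filter.eventuallyEq_of_mem (isOpen_Ioo.mem_nhds hs') hστ
      exact (hasDerivAt_id s').congr_of_eventuallyEq heq
    have h3 : f (x (τ s')) * deriv τ s' = 1 := h1.unique h2
    exact eq_inv_of_mul_eq_one_left (by rw [mul_comm]; exact h3)
  -- derivative of y = x ∘ τ
  have hyda : ∀ s' ∈ Set.Ioo a b,
      HasDerivAt (x ∘ τ) ((f (x (τ s')))⁻¹ • x' (τ s')) s' := by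
    intro s' hs'
    have h := (hx (τ s')).scomp s' (hτda s' hs')
    rwa [hτ' s' hs'] at h
  have hyd : ∀ s' ∈ Set.Ioo a b,
      deriv (x ∘ τ) s' = (f (x (τ s')))⁻¹ • x' (τ s') :=
    fun s' hs' => (hyda s' hs').deriv
  -- energy: speed square
  have hsp : ∀ t, ‖x' t‖ ^ 2 = f (x t) := by
    intro t
    have h := hE t
    rw [hf]
    linarith
  intro s hs
  have hFne : f (x (τ s)) ≠ 0 := (hfpos (τ s)).ne'
  set t₀ := τ s with ht₀
  set Fc := f (x t₀) with hFc
  constructor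
  · -- unit speed
    have h1 : f ((x ∘ τ) s) = Fc := rfl
    rw [h1, hyd s hs]
    rw [norm_smul, mul_pow, Real.norm_eq_abs, sq_abs, hsp]
    have h2 : Fc = f (x (τ s)) := rfl
    rw [← h2]
    field_simp
  · -- geodesic equation
    -- the derivative function agrees with w on a neighborhood
    have hev : deriv (x ∘ τ) =ᶠ[nhds s] fun s' => (f (x (τ s')))⁻¹ • x' (τ s') :=
      Filter.eventuallyEq_of_mem (isOpen_Ioo.mem_nhds hs) hyd
    have hg : HasDerivAt (fun s' => f (x (τ s')))
        (⟪gradient f (x t₀), x' t₀⟫ * Fc⁻¹) s := by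
      have h := (hfx t₀).comp s (hτda s hs)
      rwa [hτ' s hs] at h
    have hginv : HasDerivAt (fun s' => (f (x (τ s')))⁻¹)
        (-(⟪gradient f (x t₀), x' t₀⟫ * Fc⁻¹) / Fc ^ 2) s := by
      exact hg.inv hFne
    have hx'τ : HasDerivAt (fun s' => x' (τ s')) (Fc⁻¹ • x'' t₀) s := by
      have h := (hx' t₀).scomp s (hτda s hs)
      rwa [hτ' s hs] at h
    have hw : HasDerivAt (fun s' => (f (x (τ s')))⁻¹ • x' (τ s'))
        (Fc⁻¹ • (Fc⁻¹ • x'' t₀)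
          + (-(⟪gradient f (x t₀), x' t₀⟫ * Fc⁻¹) / Fc ^ 2) • x' t₀) s := hginv.smul hx'τ
    have hdd : deriv (deriv (x ∘ τ)) s
        = Fc⁻¹ • (Fc⁻¹ • x'' t₀)
          + (-(⟪gradient f (x t₀), x' t₀⟫ * Fc⁻¹) / Fc ^ 2) • x' t₀ := by
      rw [hev.deriv_eq]
      exact hw.deriv
    rw [hdd, hyd s hs]
    have hgf : gradient f ((x ∘ τ) s) = (2:ℝ) • x'' t₀ := by
      show gradient f (x t₀) = (2:ℝ) • x'' t₀
      rw [hgradf, hNewton]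
    have hgf' : gradient f (x t₀) = (2:ℝ) • x'' t₀ := hgf
    have hfy : f ((x ∘ τ) s) = Fc := rfl
    rw [hfy, hgf', hgf]
    rw [norm_smul, mul_pow, Real.norm_eq_abs, sq_abs, hsp]
    rw [real_inner_smul_left, real_inner_smul_right, real_inner_smul_left]
    rw [show τ s = t₀ from rfl, show f (x t₀) = Fc from rfl]
    match_scalars <;> field_simp <;> ring
end

section
/- Non-factorization of the free field on the circle with incommensurate Dirichlet boundary (the paper's counterexample to dynamical locality): Let θ₁, θ₂ ∈ ℝ with (θ₂ − θ₁)/π irrational, and let φ : ℝ × ℝ → ℝ be twice continuously differentiable and satisfy: (i) the one-dimensional wave equation ∂²φ/∂t²(t,θ) = ∂²φ/∂θ²(t,θ) for all (t,θ) ∈ ℝ × ℝ; (ii) spatial periodicity φ(t, θ + 2π) = φ(t, θ) for all (t,θ); and (iii) the Dirichlet conditions φ(t, θ₁) = 0 and φ(t, θ₂) = 0 for all t ∈ ℝ. Then φ is identically zero. -/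
/-- The characteristic parallelogram identity for `C²` solutions of the wave
equation (in second-Fréchet-derivative form). -/
lemma wave_parallelogram (φ : ℝ × ℝ → ℝ) (hreg : ContDiff ℝ 2 φ)
    (hw : ∀ p : ℝ × ℝ,
      fderiv ℝ (fderiv ℝ φ) p (1, 0) (1, 0) = fderiv ℝ (fderiv ℝ φ) p (0, 1) (0, 1)) :
    ∀ t θ a b : ℝ,
      φ (t + a + b, θ + a - b) + φ (t, θ) = φ (t + a, θ + a) + φ (t + b, θ - b) := by
  have hd : Differentiable ℝ φ := hreg.differentiable (by norm_num)
  have hd1 : ContDiff ℝ 1 (fderiv ℝ φ) := hreg.fderiv_right (by norm_num)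
  have hdd : Differentiable ℝ (fderiv ℝ φ) := hd1.differentiable (by norm_num)
  -- derivative along a line, for `φ`
  have hline : ∀ (p v : ℝ × ℝ) (s : ℝ), HasDerivAt (fun s : ℝ => p + s • v) v s := by
    intro p v s
    simpa using ((hasDerivAt_id s).smul_const v).const_add p
  have lineφ : ∀ (p v : ℝ × ℝ) (s : ℝ),
      HasDerivAt (fun s : ℝ => φ (p + s • v)) (fderiv ℝ φ (p + s • v) v) s := by
    intro p v s
    exact ((hd (p + s • v)).hasFDerivAt).comp_hasDerivAt s (hline p v s)
  -- derivative along a line, for directional derivatives of `φ`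
  have lineD : ∀ (p v w : ℝ × ℝ) (s : ℝ),
      HasDerivAt (fun s : ℝ => fderiv ℝ φ (p + s • v) w)
        (fderiv ℝ (fderiv ℝ φ) (p + s • v) v w) s := by
    intro p v w s
    have h1 : HasDerivAt (fun s : ℝ => fderiv ℝ φ (p + s • v))
        (fderiv ℝ (fderiv ℝ φ) (p + s • v) v) s :=
      ((hdd (p + s • v)).hasFDerivAt).comp_hasDerivAt s (hline p v s)
    exact
      ((ContinuousLinearMap.apply ℝ ℝ w).hasFDerivAt).comp_hasDerivAt s h1
  -- symmetry of second derivative (Clairaut)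
  have hsymm : ∀ (u v w : ℝ × ℝ),
      fderiv ℝ (fderiv ℝ φ) u v w = fderiv ℝ (fderiv ℝ φ) u w v := fun u v w =>
    second_derivative_symmetric (fun y => (hd y).hasFDerivAt) ((hdd u).hasFDerivAt) v w
  -- mixed characteristic second derivative vanishes
  have hmix : ∀ u : ℝ × ℝ,
      fderiv ℝ (fderiv ℝ φ) u (1, 1) ((1 : ℝ), (-1 : ℝ)) = 0 := by
    intro u
    have e1 : ((1 : ℝ), (1 : ℝ)) = ((1 : ℝ), (0 : ℝ)) + ((0 : ℝ), (1 : ℝ)) := by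
      simp [Prod.ext_iff]
    have e2 : ((1 : ℝ), (-1 : ℝ)) = ((1 : ℝ), (0 : ℝ)) - ((0 : ℝ), (1 : ℝ)) := by
      simp [Prod.ext_iff]
    rw [e1, e2]
    have hw' := hw u
    have hs := hsymm u ((1 : ℝ), (0 : ℝ)) ((0 : ℝ), (1 : ℝ))
    simp only [map_add, map_sub, ContinuousLinearMap.add_apply, ContinuousLinearMap.sub_apply]
    linarith
  -- the directional derivative along (1,-1) is constant along (1,1)
  have hDconst : ∀ (q : ℝ × ℝ) (a : ℝ),
      fderiv ℝ φ (q + a • ((1 : ℝ), (1 : ℝ))) ((1 : ℝ), (-1 : ℝ))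
        = fderiv ℝ φ q ((1 : ℝ), (-1 : ℝ)) := by
    intro q a
    have hconst := is_const_of_deriv_eq_zero
      (f := fun s : ℝ => fderiv ℝ φ (q + s • ((1 : ℝ), (1 : ℝ))) ((1 : ℝ), (-1 : ℝ)))
      (fun s => (lineD q (1, 1) (1, -1) s).differentiableAt)
      (fun s => by rw [(lineD q (1, 1) (1, -1) s).deriv]; exact hmix _)
    have h := hconst a 0
    simpa using h
  -- the parallelogram identity
  intro t θ a b
  have key : ∀ c : ℝ,
      φ ((t, θ) + a • ((1 : ℝ), (1 : ℝ)) + c • ((1 : ℝ), (-1 : ℝ)))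
        - φ ((t, θ) + c • ((1 : ℝ), (-1 : ℝ)))
      = φ ((t, θ) + a • ((1 : ℝ), (1 : ℝ))) - φ ((t, θ) : ℝ × ℝ) := by
    intro c
    have hdiff : ∀ s : ℝ, HasDerivAt
        (fun s : ℝ => φ ((t, θ) + a • ((1 : ℝ), (1 : ℝ)) + s • ((1 : ℝ), (-1 : ℝ)))
          - φ ((t, θ) + s • ((1 : ℝ), (-1 : ℝ))))
        (fderiv ℝ φ ((t, θ) + a • ((1 : ℝ), (1 : ℝ)) + s • ((1 : ℝ), (-1 : ℝ))) (1, -1)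
          - fderiv ℝ φ ((t, θ) + s • ((1 : ℝ), (-1 : ℝ))) (1, -1)) s := fun s =>
      (lineφ ((t, θ) + a • ((1 : ℝ), (1 : ℝ))) (1, -1) s).sub (lineφ (t, θ) (1, -1) s)
    have hder : ∀ s : ℝ, deriv
        (fun s : ℝ => φ ((t, θ) + a • ((1 : ℝ), (1 : ℝ)) + s • ((1 : ℝ), (-1 : ℝ)))
          - φ ((t, θ) + s • ((1 : ℝ), (-1 : ℝ)))) s = 0 := by
      intro s
      rw [(hdiff s).deriv]
      have e : (t, θ) + a • ((1 : ℝ), (1 : ℝ)) + s • ((1 : ℝ), (-1 : ℝ))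
          = ((t, θ) + s • ((1 : ℝ), (-1 : ℝ))) + a • ((1 : ℝ), (1 : ℝ)) := by abel
      rw [e, hDconst ((t, θ) + s • ((1 : ℝ), (-1 : ℝ))) a, sub_self]
    have h := is_const_of_deriv_eq_zero (fun s => (hdiff s).differentiableAt) hder c 0
    simpa using h
  have h := key b
  have c1 : (t, θ) + a • ((1 : ℝ), (1 : ℝ)) + b • ((1 : ℝ), (-1 : ℝ))
      = ((t + a + b, θ + a - b) : ℝ × ℝ) := by
    simp [Prod.ext_iff]
    ring
  have c2 : (t, θ) + b • ((1 : ℝ), (-1 : ℝ)) = ((t + b, θ - b) : ℝ × ℝ) := by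
    simp [Prod.ext_iff]
    ring
  have c3 : (t, θ) + a • ((1 : ℝ), (1 : ℝ)) = ((t + a, θ + a) : ℝ × ℝ) := by
    simp [Prod.ext_iff]
  rw [c1, c2, c3] at h
  linarith

/-- Non-factorization of the free scalar field on the circle with
incommensurate Dirichlet boundary: a `C²` solution of the wave equation
`∂ₜ²φ = ∂_θ²φ`, `2π`-periodic in `θ`, vanishing on the two lines `θ = θ₁` and
`θ = θ₂` with `(θ₂ - θ₁)/π` irrational, is identically zero. -/
theorem wave_equation_incommensurate_dirichlet_rigidity
    (θ₁ θ₂ : ℝ) (hirr : Irrational ((θ₂ - θ₁) / Real.pi))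
    (φ : ℝ × ℝ → ℝ)
    (hreg : ContDiff ℝ 2 φ)
    (hwave : ∀ t θ : ℝ,
      deriv (deriv (fun a : ℝ => φ (a, θ))) t
        = deriv (deriv (fun b : ℝ => φ (t, b))) θ)
    (hper : ∀ t θ : ℝ, φ (t, θ + 2 * Real.pi) = φ (t, θ))
    (hb₁ : ∀ t : ℝ, φ (t, θ₁) = 0)
    (hb₂ : ∀ t : ℝ, φ (t, θ₂) = 0) :
    ∀ t θ : ℝ, φ (t, θ) = 0 := by
  have hd : Differentiable ℝ φ := hreg.differentiable (by norm_num)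
  have hd1 : ContDiff ℝ 1 (fderiv ℝ φ) := hreg.fderiv_right (by norm_num)
  have hdd : Differentiable ℝ (fderiv ℝ φ) := hd1.differentiable (by norm_num)
  -- translate the wave equation into second-Fréchet-derivative form
  have hlineT : ∀ θ a : ℝ, HasDerivAt (fun a : ℝ => ((a, θ) : ℝ × ℝ)) (1, 0) a :=
    fun θ a => HasDerivAt.prodMk (hasDerivAt_id a) (hasDerivAt_const a θ)
  have hlineS : ∀ t b : ℝ, HasDerivAt (fun b : ℝ => ((t, b) : ℝ × ℝ)) (0, 1) b :=
    fun t b => HasDerivAt.prodMk (hasDerivAt_const b t) (hasDerivAt_id b)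
  have hφT : ∀ θ a : ℝ, HasDerivAt (fun a : ℝ => φ (a, θ)) (fderiv ℝ φ (a, θ) (1, 0)) a :=
    fun θ a => ((hd (a, θ)).hasFDerivAt).comp_hasDerivAt a (hlineT θ a)
  have hφS : ∀ t b : ℝ, HasDerivAt (fun b : ℝ => φ (t, b)) (fderiv ℝ φ (t, b) (0, 1)) b :=
    fun t b => ((hd (t, b)).hasFDerivAt).comp_hasDerivAt b (hlineS t b)
  have hφTT : ∀ θ t : ℝ, HasDerivAt (fun a : ℝ => fderiv ℝ φ (a, θ) (1, 0))
      (fderiv ℝ (fderiv ℝ φ) (t, θ) (1, 0) (1, 0)) t := by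
    intro θ t
    have h1 : HasDerivAt (fun a : ℝ => fderiv ℝ φ (a, θ))
        (fderiv ℝ (fderiv ℝ φ) (t, θ) (1, 0)) t :=
      ((hdd (t, θ)).hasFDerivAt).comp_hasDerivAt t (hlineT θ t)
    exact
      ((ContinuousLinearMap.apply ℝ ℝ ((1 : ℝ), (0 : ℝ))).hasFDerivAt).comp_hasDerivAt t h1
  have hφSS : ∀ t θ : ℝ, HasDerivAt (fun b : ℝ => fderiv ℝ φ (t, b) (0, 1))
      (fderiv ℝ (fderiv ℝ φ) (t, θ) (0, 1) (0, 1)) θ := by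
    intro t θ
    have h1 : HasDerivAt (fun b : ℝ => fderiv ℝ φ (t, b))
        (fderiv ℝ (fderiv ℝ φ) (t, θ) (0, 1)) θ :=
      ((hdd (t, θ)).hasFDerivAt).comp_hasDerivAt θ (hlineS t θ)
    exact
      ((ContinuousLinearMap.apply ℝ ℝ ((0 : ℝ), (1 : ℝ))).hasFDerivAt).comp_hasDerivAt θ h1
  have hw : ∀ p : ℝ × ℝ,
      fderiv ℝ (fderiv ℝ φ) p (1, 0) (1, 0) = fderiv ℝ (fderiv ℝ φ) p (0, 1) (0, 1) := by
    rintro ⟨t, θ⟩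
    have h := hwave t θ
    have e1 : deriv (fun a : ℝ => φ (a, θ)) = fun a : ℝ => fderiv ℝ φ (a, θ) (1, 0) :=
      funext fun a => (hφT θ a).deriv
    have e2 : deriv (fun b : ℝ => φ (t, b)) = fun b : ℝ => fderiv ℝ φ (t, b) (0, 1) :=
      funext fun b => (hφS t b).deriv
    rw [e1, e2, (hφTT θ t).deriv, (hφSS t θ).deriv] at h
    exact h
  have hpar := wave_parallelogram φ hreg hw
  -- odd reflection about the line θ = θ₁
  have refl1 : ∀ s c : ℝ, φ (s, θ₁ + c) = - φ (s, θ₁ - c) := by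
    intro s c
    have h := hpar (s - c) θ₁ c c
    rw [show s - c + c + c = s + c by ring, show θ₁ + c - c = θ₁ by ring,
      show s - c + c = s by ring, hb₁ (s + c), hb₁ (s - c)] at h
    linarith
  -- odd reflection about the line θ = θ₂
  have refl2 : ∀ s c : ℝ, φ (s, θ₂ + c) = - φ (s, θ₂ - c) := by
    intro s c
    have h := hpar (s - c) θ₂ c c
    rw [show s - c + c + c = s + c by ring, show θ₂ + c - c = θ₂ by ring,
      show s - c + c = s by ring, hb₂ (s + c), hb₂ (s - c)] at h
    linarith
  -- hence spatial periodicity with period 2(θ₂ - θ₁)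
  have hp0 : ∀ t x : ℝ, φ (t, x + 2 * (θ₂ - θ₁)) = φ (t, x) := by
    intro t x
    rw [show x + 2 * (θ₂ - θ₁) = θ₂ + (θ₂ - 2 * θ₁ + x) by ring,
      refl2 t (θ₂ - 2 * θ₁ + x),
      show θ₂ - (θ₂ - 2 * θ₁ + x) = θ₁ + (θ₁ - x) by ring,
      refl1 t (θ₁ - x), show θ₁ - (θ₁ - x) = x by ring, neg_neg]
  intro t θ
  -- the group of spatial periods of φ(t, ·)
  let G : AddSubgroup ℝ :=
    { carrier := {p : ℝ | ∀ x : ℝ, φ (t, x + p) = φ (t, x)}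
      zero_mem' := fun x => by rw [add_zero]
      add_mem' := by
        intro p q hp hq x
        rw [← add_assoc, hq (x + p), hp x]
      neg_mem' := by
        intro p hp x
        have h := hp (x - p)
        rw [sub_add_cancel] at h
        rw [← sub_eq_add_neg, ← h] }
  have h2π : (2 * Real.pi) ∈ G := fun x => hper t x
  have hpp : (2 * (θ₂ - θ₁)) ∈ G := fun x => hp0 t x
  have hdense : Dense (G : Set ℝ) := by
    rcases AddSubgroup.dense_or_cyclic G with h | ⟨a, ha⟩
    · exact h
    · exfalso
      rw [ha] at h2π hpp
      obtain ⟨m, hm⟩ := AddSubgroup.mem_closure_singleton.mp h2π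
      obtain ⟨n, hn⟩ := AddSubgroup.mem_closure_singleton.mp hpp
      rw [zsmul_eq_mul] at hm hn
      have hπ := Real.pi_pos
      have hma : (m : ℝ) * a ≠ 0 := by rw [hm]; positivity
      have hm0 : (m : ℝ) ≠ 0 := fun h => hma (by rw [h, zero_mul])
      apply hirr
      refine ⟨(n : ℚ) / (m : ℚ), ?_⟩
      push_cast
      rw [div_eq_div_iff hm0 (ne_of_gt hπ)]
      linear_combination (-(n : ℝ) / 2) * hm + ((m : ℝ) / 2) * hn
  have hcont : Continuous (fun p : ℝ => φ (t, θ₁ + p)) :=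
    hreg.continuous.comp (continuous_const.prodMk (continuous_const.add continuous_id))
  have hzero : Set.EqOn (fun p : ℝ => φ (t, θ₁ + p)) (fun _ => (0 : ℝ)) (G : Set ℝ) := by
    intro p hp
    have h := hp θ₁
    simp only
    rw [h, hb₁ t]
  have hall : (fun p : ℝ => φ (t, θ₁ + p)) = fun _ => (0 : ℝ) :=
    Continuous.ext_on hdense hcont continuous_const hzero
  have h := congrFun hall (θ - θ₁)
  simpa using h
end
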